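/- Let a, b, c be real numbers, and suppose M, M', M~, M^ are formal power series in ℝ[[X]] satisfying the four functional equations: (1 − 8X)·M = 1 + 10X + 10a·X²·M' + 10b·X²·M~ + 10c·X²·M^; (1 − 3aX)·M' = 3 + 5M + 3b·X·M~ + 3c·X·M^; (1 − 5bX)·M~ = 5 + 3M + 5a·X·M' + 5c·X·M^; and (1 − 4cX)·M^ = 4 + 4M + 4a·X·M' + 4b·X·M~. Then (1 − (8 + 3a + 5b + 4c)·X − (26a − 10b + 8c)·X²)·M = 1 + (10 − 3a − 5b − 4c)·X. -/

import Mathlib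

open PowerSeries

/-- Algebraic elimination step solving the system of generating-function equations for the
expected Hosoya index of the random hexagonal cactus. -/
theorem hosoya_elimination (a b c : ℝ) (M M' Mt Mh : ℝ⟦X⟧)
    (h1 : (1 - 8 * X) * M
      = 1 + 10 * X + PowerSeries.C (R := ℝ) (10 * a) * X ^ 2 * M'
        + PowerSeries.C (R := ℝ) (10 * b) * X ^ 2 * Mt + PowerSeries.C (R := ℝ) (10 * c) * X ^ 2 * Mh)
    (h2 : (1 - PowerSeries.C (R := ℝ) (3 * a) * X) * M'
      = 3 + 5 * M + PowerSeries.C (R := ℝ) (3 * b) * X * Mt + PowerSeries.C (R := ℝ) (3 * c) * X * Mh)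
    (h3 : (1 - PowerSeries.C (R := ℝ) (5 * b) * X) * Mt
      = 5 + 3 * M + PowerSeries.C (R := ℝ) (5 * a) * X * M' + PowerSeries.C (R := ℝ) (5 * c) * X * Mh)
    (h4 : (1 - PowerSeries.C (R := ℝ) (4 * c) * X) * Mh
      = 4 + 4 * M + PowerSeries.C (R := ℝ) (4 * a) * X * M' + PowerSeries.C (R := ℝ) (4 * b) * X * Mt) :
    (1 - PowerSeries.C (R := ℝ) (8 + 3 * a + 5 * b + 4 * c) * X
       - PowerSeries.C (R := ℝ) (26 * a - 10 * b + 8 * c) * X ^ 2) * M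
      = 1 + PowerSeries.C (R := ℝ) (10 - 3 * a - 5 * b - 4 * c) * X := by
  simp only [map_mul, map_add, map_sub, map_ofNat, map_one] at *
  linear_combination (1 - (3 * PowerSeries.C (R := ℝ) a + 5 * PowerSeries.C (R := ℝ) b + 4 * PowerSeries.C (R := ℝ) c) * X) * h1
    + 10 * X ^ 2 * (PowerSeries.C (R := ℝ) a * h2 + PowerSeries.C (R := ℝ) b * h3 + PowerSeries.C (R := ℝ) c * h4)
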